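/- Fix constants ρ, β, κ > 0, stepsize η̃ > 0, and n ≥ 1. The function Φ(x) = log(−log(2n e^κ x)) + (1 + (4ρ² + 2β)η̃)/log(2n e^κ x) is convex on the interval (0, 1/(2n e^{2+κ})). -/

import Mathlib

open Real

theorem stmt_7 (n : ℕ) (hn : 1 ≤ n) (ρ β κ η : ℝ) (hρ : 0 < ρ) (hβ : 0 < β)
    (hκ : 0 < κ) (hη : 0 < η) :
    ConvexOn ℝ (Set.Ioo (0 : ℝ) (1 / (2 * n * Real.exp (2 + κ))))
      (fun x : ℝ =>
        Real.log (-Real.log (2 * n * Real.exp κ * x)) +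
          (1 + (4 * ρ ^ 2 + 2 * β) * η) / Real.log (2 * n * Real.exp κ * x)) := by
  have hn1 : (1:ℝ) ≤ n := by exact_mod_cast hn
  set a : ℝ := 2 * n * Real.exp κ with ha_def
  have ha : 0 < a := by
    have := Real.exp_pos κ
    nlinarith
  set c : ℝ := 1 + (4 * ρ ^ 2 + 2 * β) * η with hc_def
  have hc : 0 < c := by positivity
  set D : Set ℝ := Set.Ioo (0 : ℝ) (1 / (2 * n * Real.exp (2 + κ))) with hD_def
  have hDa : (1 : ℝ) / (2 * n * Real.exp (2 + κ)) = 1 / (a * Real.exp 2) := by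
    rw [ha_def, Real.exp_add]; ring_nf
  have hDopen : IsOpen D := isOpen_Ioo
  -- key bound on L
  have hL2 : ∀ x ∈ D, Real.log (a * x) < -2 := by
    intro x hx
    obtain ⟨hx0, hx1⟩ := hx
    rw [hDa] at hx1
    have hax : a * x < Real.exp (-2) := by
      rw [Real.exp_neg]
      have h2 : (0:ℝ) < Real.exp 2 := Real.exp_pos 2
      calc a * x < a * (1 / (a * Real.exp 2)) := mul_lt_mul_of_pos_left hx1 ha
        _ = (Real.exp 2)⁻¹ := by field_simp
    have hax0 : 0 < a * x := mul_pos ha (by exact hx0)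
    calc Real.log (a * x) < Real.log (Real.exp (-2)) := Real.log_lt_log hax0 hax
      _ = -2 := Real.log_exp _
  set f : ℝ → ℝ := fun x => Real.log (-Real.log (a * x)) + c / Real.log (a * x) with hf_def
  set f' : ℝ → ℝ := fun x => (Real.log (a * x) - c) / (x * Real.log (a * x) ^ 2) with hf'_def
  set f'' : ℝ → ℝ := fun x =>
    (-(Real.log (a * x)) ^ 2 + (c - 1) * Real.log (a * x) + 2 * c) /
      (x ^ 2 * Real.log (a * x) ^ 3) with hf''_def
  -- derivative of L
  have hLd : ∀ x ∈ D, HasDerivAt (fun y => Real.log (a * y)) x⁻¹ x := by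
    intro x hx
    have hx0 : (0:ℝ) < x := hx.1
    have h1 : HasDerivAt (fun y : ℝ => a * y) a x := by
      simpa using (hasDerivAt_id x).const_mul a
    have h2 := (Real.hasDerivAt_log (mul_pos ha hx0).ne').comp x h1
    have h3 : (a * x)⁻¹ * a = x⁻¹ := by field_simp
    rw [h3] at h2
    exact h2
  have hfd : ∀ x ∈ D, HasDerivAt f (f' x) x := by
    intro x hx
    have hx0 : (0:ℝ) < x := hx.1
    have hLx := hL2 x hx
    have hLne : Real.log (a * x) ≠ 0 := by linarith
    have hnegne : -Real.log (a * x) ≠ 0 := by simp [hLne]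
    have t1 := (Real.hasDerivAt_log hnegne).comp x (hLd x hx).neg
    have t2 := (hasDerivAt_const x c).div (hLd x hx) hLne
    have := t1.add t2
    have heq : (-Real.log (a * x))⁻¹ * -x⁻¹ +
        (0 * Real.log (a * x) - c * x⁻¹) / Real.log (a * x) ^ 2 = f' x := by
      rw [hf'_def]
      field_simp
      ring
    rw [heq] at this
    exact this
  have hfd' : ∀ x ∈ D, HasDerivAt f' (f'' x) x := by
    intro x hx
    have hx0 : (0:ℝ) < x := hx.1
    have hLx := hL2 x hx
    have hLne : Real.log (a * x) ≠ 0 := by linarith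
    have hN := (hLd x hx).sub_const c
    have hden : HasDerivAt (fun y => y * Real.log (a * y) ^ 2)
        (1 * Real.log (a * x) ^ 2 + x * (2 * Real.log (a * x) ^ 1 * x⁻¹)) x :=
      (hasDerivAt_id x).mul ((hLd x hx).pow 2)
    have hdenne : x * Real.log (a * x) ^ 2 ≠ 0 := by positivity
    have hdiv := hN.div hden hdenne
    have heq : (x⁻¹ * (x * Real.log (a * x) ^ 2) -
        (Real.log (a * x) - c) * (1 * Real.log (a * x) ^ 2 + x * (2 * Real.log (a * x) ^ 1 * x⁻¹))) /
        (x * Real.log (a * x) ^ 2) ^ 2 = f'' x := by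
      rw [hf''_def]
      field_simp
      ring
    rw [heq] at hdiv
    exact hdiv
  have hderiv_eq : ∀ x ∈ D, deriv f x = f' x := fun x hx => (hfd x hx).deriv
  have hderiv2 : ∀ x ∈ D, HasDerivAt (deriv f) (f'' x) x := by
    intro x hx
    refine (hfd' x hx).congr_of_eventuallyEq ?_
    filter_upwards [hDopen.eventually_mem hx] with y hy
    exact hderiv_eq y hy
  have hint : interior D = D := hDopen.interior_eq
  apply convexOn_of_deriv2_nonneg (convex_Ioo _ _)
  · exact fun x hx => ((hfd x hx).differentiableAt.differentiableWithinAt).continuousWithinAt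
  · rw [hint]; exact fun x hx => (hfd x hx).differentiableAt.differentiableWithinAt
  · rw [hint]; exact fun x hx => (hderiv2 x hx).differentiableAt.differentiableWithinAt
  · rw [hint]
    intro x hx
    have h2 : deriv^[2] f x = f'' x := by
      simp only [Function.iterate_succ, Function.iterate_zero, Function.comp_apply, id]
      exact (hderiv2 x hx).deriv
    rw [h2, hf''_def]
    have hx0 : (0:ℝ) < x := hx.1
    have hLx := hL2 x hx
    set L := Real.log (a * x) with hL_def
    have hnum : -L ^ 2 + (c - 1) * L + 2 * c ≤ 0 := by
      nlinarith [mul_pos hc (by linarith : (0:ℝ) < -(L + 2))]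
    have hden : x ^ 2 * L ^ 3 < 0 := by
      have hL3 : L ^ 3 < 0 := by nlinarith [sq_nonneg L]
      have : (0:ℝ) < x ^ 2 := by positivity
      nlinarith
    exact div_nonneg_iff.mpr (Or.inr ⟨hnum, hden.le⟩)
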